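/- Let (Ω_v)_{v∈V₂}, (T_f)_{f∈E₂} be a dynamical Cuntz–Krieger Γ₂-family in the boundary path groupoid G_{Γ₁} satisfying: for all u ∈ V₁, v ∈ V₂, either Z_u Ω_v = ∅ or Z_u Ω_v = Z_u; and for all u ∈ V₁, f ∈ E₂, either T_f Z_u = ∅ or T_f Z_u = Z(x, s(x)) for some finite path x. Then there exists an admissible relation morphism R : Γ₁ → Γ₂ whose associated dynamical Cuntz–Krieger family equals (Ω_v), (T_f). The relation is given on vertices by R⁰ = {(u,v) : Z_u Ω_v = Z_u} and on edges by R¹ = {(x,f) : T_f Z(s(x), x) = Z(x,x)}. -/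

import Mathlib

/-- A directed graph. -/
structure DGraph where
  V : Type
  E : Type
  r : E → V
  s : E → V

namespace DGraph

variable (Γ : DGraph)

/-- A vertex is regular if it receives a finite nonzero number of edges. -/
def Regular (v : Γ.V) : Prop :=
  {e | Γ.r e = v}.Finite ∧ {e | Γ.r e = v}.Nonempty

/-- Compatibility of a list of edges (written from range to source) with a final
source vertex: consecutive edges are composable and the last edge starts at the
given vertex. -/
def compat : List Γ.E → Γ.V → Prop
  | [], _ => True
  | [e], v => Γ.s e = v
  | e :: f :: rest, v => Γ.s e = Γ.r f ∧ compat (f :: rest) v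

/-- A finite path in a graph: a composable list of edges together with its source
vertex (paths of length zero are vertices). -/
structure FinPath where
  edges : List Γ.E
  src : Γ.V
  ok : Γ.compat edges src

/-- The range of a finite path. -/
def FinPath.rng (x : FinPath Γ) : Γ.V :=
  match x.edges with
  | [] => x.src
  | e :: _ => Γ.r e

/-- A vertex regarded as a path of length zero. -/
def ofVtx (v : Γ.V) : FinPath Γ := ⟨[], v, trivial⟩

/-- An edge regarded as a path of length one. -/
def ofEdge (e : Γ.E) : FinPath Γ := ⟨[e], Γ.s e, rfl⟩


theorem compat_append (L₁ L₂ : List Γ.E) (v w : Γ.V)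
    (h1 : Γ.compat L₁ v) (h2 : Γ.compat L₂ w)
    (hlink : v = (match L₂ with | [] => w | e :: _ => Γ.r e)) :
    Γ.compat (L₁ ++ L₂) w := by
  induction L₁ with
  | nil => simpa using h2
  | cons e L₁' ih =>
    cases L₁' with
    | nil =>
      cases L₂ with
      | nil =>
        show Γ.compat [e] w
        have : Γ.s e = v := h1
        simpa [compat] using this.trans hlink
      | cons f L₂' =>
        refine ⟨?_, h2⟩
        · simp only [compat] at h1
          exact h1.trans (by simpa using hlink)
    | cons f L₁'' =>
      obtain ⟨hef, hrest⟩ := h1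
      exact ⟨hef, ih hrest⟩


theorem compat_append' (x y : FinPath Γ) (h : x.src = y.rng) :
    Γ.compat (x.edges ++ y.edges) y.src := by
  obtain ⟨L, v, hc⟩ := y
  cases L with
  | nil => exact Γ.compat_append _ _ _ _ x.ok hc (by simpa [FinPath.rng] using h)
  | cons e tl => exact Γ.compat_append _ _ x.src _ x.ok hc (by simpa [FinPath.rng] using h)

/-- Concatenation of finite paths (`x.comp y` traverses `y` first, then `x`). -/
def FinPath.comp (x y : FinPath Γ) (h : x.src = y.rng) : FinPath Γ :=
  ⟨x.edges ++ y.edges, y.src, Γ.compat_append' x y h⟩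

/-- `x ⪯ x'`: `x` is an initial segment of `x'`, that is, `x' = x y`. -/
def IsPrefix (x x' : FinPath Γ) : Prop :=
  ∃ (y : FinPath Γ) (h : x.src = y.rng), x' = FinPath.comp Γ x y h

/-- An infinite path: a sequence of composable edges, written from range to
source. -/
structure InfPath where
  seq : ℕ → Γ.E
  ok : ∀ n, Γ.s (seq n) = Γ.r (seq (n + 1))

/-- A boundary path: a finite path whose source is a singular vertex, or an
infinite path. -/
inductive BPath where
  | fin : (p : FinPath Γ) → ¬ Γ.Regular p.src → BPath
  | inf : InfPath Γ → BPath

/-- The range of a boundary path. -/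
def BPath.rng : BPath Γ → Γ.V
  | .fin p _ => p.rng
  | .inf p => Γ.r (p.seq 0)

/-- Prepend a finite list of edges to an infinite edge sequence. -/
def prependSeq (L : List Γ.E) (σ : ℕ → Γ.E) : ℕ → Γ.E :=
  fun n => if h : n < L.length then L.get ⟨n, h⟩ else σ (n - L.length)


theorem compat_get : ∀ (L : List Γ.E) (v : Γ.V), Γ.compat L v →
    ∀ (i : ℕ) (hi : i + 1 < L.length),
      Γ.s (L.get ⟨i, Nat.lt_of_succ_lt hi⟩) = Γ.r (L.get ⟨i + 1, hi⟩)
  | [], v, hc, i, hi => by simp at hi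
  | [e], v, hc, i, hi => by simp at hi
  | e :: f :: rest, v, hc, 0, hi => hc.1
  | e :: f :: rest, v, hc, (m+1), hi =>
      compat_get (f :: rest) v hc.2 m (by simpa using hi)

theorem compat_last : ∀ (L : List Γ.E) (v : Γ.V), Γ.compat L v →
    ∀ (h : 0 < L.length), Γ.s (L.get ⟨L.length - 1, by omega⟩) = v
  | [], v, hc, h => by simp at h
  | [e], v, hc, h => hc
  | e :: f :: rest, v, hc, h =>
      compat_last (f :: rest) v hc.2 (by simp)

theorem prependSeq_ok (L : List Γ.E) (v : Γ.V) (hc : Γ.compat L v)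
    (σ : ℕ → Γ.E) (hσ : ∀ n, Γ.s (σ n) = Γ.r (σ (n + 1))) (hv : v = Γ.r (σ 0)) :
    ∀ n, Γ.s (Γ.prependSeq L σ n) = Γ.r (Γ.prependSeq L σ (n + 1)) := by
  intro n
  unfold prependSeq
  by_cases h1 : n < L.length
  · by_cases h2 : n + 1 < L.length
    · rw [dif_pos h1, dif_pos h2]
      exact Γ.compat_get L v hc n h2
    · have hlen : n + 1 = L.length := by omega
      rw [dif_pos h1, dif_neg h2]
      have : n + 1 - L.length = 0 := by omega
      rw [this]
      have hlast := Γ.compat_last L v hc (by omega)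
      have : (⟨n, h1⟩ : Fin L.length) = ⟨L.length - 1, by omega⟩ := by
        apply Fin.ext; simp; omega
      rw [this, hlast, hv]
  · have h2 : ¬ (n + 1 < L.length) := by omega
    rw [dif_neg h1, dif_neg h2]
    have : n + 1 - L.length = (n - L.length) + 1 := by omega
    rw [this]
    exact hσ _

/-- Concatenation `x z` of a finite path `x` with a boundary path `z` with
`r(z) = s(x)`. -/
def BPath.cons (x : FinPath Γ) (z : BPath Γ) (h : x.src = z.rng) : BPath Γ :=
  match z, h with
  | .fin p hp, h =>
      .fin ⟨x.edges ++ p.edges, p.src, Γ.compat_append' x p h⟩ hp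
  | .inf p, h => .inf ⟨Γ.prependSeq x.edges p.seq, Γ.prependSeq_ok x.edges x.src x.ok p.seq p.ok h⟩

/-- The cylinder set `Z_x ⊆ ∂Γ` of boundary paths extending the finite path
`x`. -/
def cyl (x : FinPath Γ) : Set (BPath Γ) :=
  {z | ∃ (z' : BPath Γ) (h : x.src = z'.rng), z = BPath.cons Γ x z' h}

/-- The cylinder set `Z_v ⊆ ∂Γ` of boundary paths with range `v`. -/
def cylV (v : Γ.V) : Set (BPath Γ) := {z | z.rng = v}

/-- The cylinder topology on the boundary path space. -/
instance : TopologicalSpace (BPath Γ) :=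
  TopologicalSpace.generateFrom
    {S | ∃ (x : FinPath Γ) (F : Set (FinPath Γ)), F.Finite ∧
      S = Γ.cyl x \ ⋃ y ∈ F, Γ.cyl y}

/-- The arrows of the boundary path groupoid `G_Γ`: triples
`(x z, |x| - |y|, y z)`. -/
def GArr : Set (BPath Γ × ℤ × BPath Γ) :=
  {t | ∃ (x y : FinPath Γ) (z : BPath Γ) (hx : x.src = z.rng) (hy : y.src = z.rng),
    t.1 = BPath.cons Γ x z hx ∧ t.2.2 = BPath.cons Γ y z hy ∧
    t.2.1 = (x.edges.length : ℤ) - (y.edges.length : ℤ)}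

/-- The arrow space of the boundary path groupoid. -/
def GArrT := {t : BPath Γ × ℤ × BPath Γ // t ∈ Γ.GArr}

instance : TopologicalSpace (GArrT Γ) :=
  inferInstanceAs (TopologicalSpace {t : BPath Γ × ℤ × BPath Γ // t ∈ Γ.GArr})

/-- The range map of the boundary path groupoid. -/
def grng (t : GArrT Γ) : BPath Γ := t.val.1

/-- The source map of the boundary path groupoid. -/
def gsrc (t : GArrT Γ) : BPath Γ := t.val.2.2

/-- The basic compact-open bisection `Z(x,y)` of the boundary path groupoid. -/
def ZZ (x y : FinPath Γ) : Set (GArrT Γ) :=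
  {t | ∃ (z : BPath Γ) (hx : x.src = z.rng) (hy : y.src = z.rng),
    t.val = (BPath.cons Γ x z hx,
      (x.edges.length : ℤ) - (y.edges.length : ℤ), BPath.cons Γ y z hy)}

/-- The product of two subsets of the boundary path groupoid. -/
def gmul (A B : Set (GArrT Γ)) : Set (GArrT Γ) :=
  {c | ∃ a ∈ A, ∃ b ∈ B, a.val.2.2 = b.val.1 ∧
    c.val = (a.val.1, a.val.2.1 + b.val.2.1, b.val.2.2)}

/-- A subset of the boundary path space regarded as a subset of the unit space of
the boundary path groupoid. -/
def unitSet (S : Set (BPath Γ)) : Set (GArrT Γ) :=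
  {t | t.val.2.1 = 0 ∧ t.val.1 = t.val.2.2 ∧ t.val.1 ∈ S}

end DGraph

namespace DGraph

variable (Γ₁ Γ₂ : DGraph)

/-- A relation morphism between two graphs
(Definition 3.1 of Castro–D'Andrea–Hajac): a relation on finite path spaces whose
preimage of vertices consists of vertices and which preserves sources and
ranges. -/
structure IsRelMor (R : Set (FinPath Γ₁ × FinPath Γ₂)) : Prop where
  vtx : ∀ p ∈ R, p.2.edges = [] → p.1.edges = []
  src_mem : ∀ p ∈ R, (ofVtx Γ₁ p.1.src, ofVtx Γ₂ p.2.src) ∈ R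
  rng_mem : ∀ p ∈ R, (ofVtx Γ₁ p.1.rng, ofVtx Γ₂ p.2.rng) ∈ R

/-- Multiplicativity of a relation morphism. -/
def Multiplicative (R : Set (FinPath Γ₁ × FinPath Γ₂)) : Prop :=
  ∀ (x : FinPath Γ₁) (y : FinPath Γ₂) (x' : FinPath Γ₁) (y' : FinPath Γ₂)
    (hx : x.src = x'.rng) (hy : y.src = y'.rng),
    (x, y) ∈ R → (x', y') ∈ R → (FinPath.comp Γ₁ x x' hx, FinPath.comp Γ₂ y y' hy) ∈ R

/-- Decomposability of a relation morphism. -/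
def Decomposable (R : Set (FinPath Γ₁ × FinPath Γ₂)) : Prop :=
  ∀ (y y' : FinPath Γ₂) (h : y.src = y'.rng) (xb : FinPath Γ₁),
    (xb, FinPath.comp Γ₂ y y' h) ∈ R → ∃ (x x' : FinPath Γ₁) (hx : x.src = x'.rng),
      (x, y) ∈ R ∧ (x', y') ∈ R ∧ FinPath.comp Γ₁ x x' hx = xb

/-- Properness of a relation morphism: all preimages are finite. -/
def ProperRel (R : Set (FinPath Γ₁ × FinPath Γ₂)) : Prop :=
  ∀ y : FinPath Γ₂, {x | (x, y) ∈ R}.Finite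

/-- Vertex disjointness of a relation morphism. -/
def VertexDisjoint (R : Set (FinPath Γ₁ × FinPath Γ₂)) : Prop :=
  ∀ v v' : Γ₂.V, v ≠ v' →
    {x | (x, ofVtx Γ₂ v) ∈ R} ∩ {x | (x, ofVtx Γ₂ v') ∈ R} = ∅

/-- Source bijectivity of a relation morphism. -/
def SourceBijective (R : Set (FinPath Γ₁ × FinPath Γ₂)) : Prop :=
  ∀ f : Γ₂.E,
    Set.BijOn (fun x : FinPath Γ₁ => ofVtx Γ₁ x.src)
      {x | (x, ofEdge Γ₂ f) ∈ R} {x | (x, ofVtx Γ₂ (Γ₂.s f)) ∈ R}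

/-- Monotonicity of a relation morphism. -/
def MonotoneRel (R : Set (FinPath Γ₁ × FinPath Γ₂)) : Prop :=
  ∀ (x x' : FinPath Γ₁) (f f' : Γ₂.E),
    (x, ofEdge Γ₂ f) ∈ R → (x', ofEdge Γ₂ f') ∈ R →
    (IsPrefix Γ₁ x x' ∨ IsPrefix Γ₁ x' x) → x = x' ∧ f = f'

/-- Regularity of a relation morphism. -/
def RegularRel (R : Set (FinPath Γ₁ × FinPath Γ₂)) : Prop :=
  ∀ v : Γ₂.V, Γ₂.Regular v →
    ∀ u : Γ₁.V, (ofVtx Γ₁ u, ofVtx Γ₂ v) ∈ R →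
      ∀ x : FinPath Γ₁, x.rng = u → ∃ (f : Γ₂.E) (x' : FinPath Γ₁),
        Γ₂.r f = v ∧ (x', ofEdge Γ₂ f) ∈ R ∧
        (IsPrefix Γ₁ x x' ∨ IsPrefix Γ₁ x' x)

/-- An admissible relation morphism
(Definition 6.5 of Castro–D'Andrea–Hajac). -/
structure IsAdmissible (R : Set (FinPath Γ₁ × FinPath Γ₂)) : Prop where
  relMor : IsRelMor Γ₁ Γ₂ R
  mult : Multiplicative Γ₁ Γ₂ R
  decomp : Decomposable Γ₁ Γ₂ R
  proper : ProperRel Γ₁ Γ₂ R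
  vdisj : VertexDisjoint Γ₁ Γ₂ R
  sbij : SourceBijective Γ₁ Γ₂ R
  mono : MonotoneRel Γ₁ Γ₂ R
  regular : RegularRel Γ₁ Γ₂ R

/-- The vertex sets `Ω_v = ⋃_{u ∈ R⁻¹(v)} Z_u` associated to a relation
morphism. -/
def relΩ (R : Set (FinPath Γ₁ × FinPath Γ₂)) (v : Γ₂.V) : Set (BPath Γ₁) :=
  ⋃ u ∈ {u : Γ₁.V | (ofVtx Γ₁ u, ofVtx Γ₂ v) ∈ R}, cylV Γ₁ u

/-- The bisections `T_f = ⋃_{x ∈ R⁻¹(f)} Z(x, s(x))` associated to a relation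
morphism. -/
def relT (R : Set (FinPath Γ₁ × FinPath Γ₂)) (f : Γ₂.E) : Set (GArrT Γ₁) :=
  ⋃ x ∈ {x : FinPath Γ₁ | (x, ofEdge Γ₂ f) ∈ R}, ZZ Γ₁ x (ofVtx Γ₁ x.src)

/-- A dynamical Cuntz--Krieger `Γ₂`-family in the boundary path groupoid
`G_{Γ₁}`. -/
structure IsDCKb (Ω : Γ₂.V → Set (BPath Γ₁)) (T : Γ₂.E → Set (GArrT Γ₁)) :
    Prop where
  compact_Ω : ∀ v, IsCompact (Ω v)
  open_Ω : ∀ v, IsOpen (Ω v)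
  compact_T : ∀ f, IsCompact (T f)
  open_T : ∀ f, IsOpen (T f)
  inj_r : ∀ f, Set.InjOn (grng Γ₁) (T f)
  inj_s : ∀ f, Set.InjOn (gsrc Γ₁) (T f)
  disj : ∀ v w, v ≠ w → Ω v ∩ Ω w = ∅
  src_eq : ∀ f, gsrc Γ₁ '' T f = Ω (Γ₂.s f)
  rng_sub : ∀ f, grng Γ₁ '' T f ⊆ Ω (Γ₂.r f)
  rng_disj : ∀ f g, f ≠ g → grng Γ₁ '' T f ∩ grng Γ₁ '' T g = ∅
  reg : ∀ v, Γ₂.Regular v → (⋃ f ∈ {f | Γ₂.r f = v}, grng Γ₁ '' T f) = Ω v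

end DGraph



namespace DGraph

variable (Γ : DGraph)

theorem FinPath.ext' {Γ : DGraph} {x y : FinPath Γ} (h1 : x.edges = y.edges)
    (h2 : x.src = y.src) : x = y := by
  cases x; cases y; cases h1; cases h2; rfl

@[simp] theorem ofVtx_edges (u : Γ.V) : (ofVtx Γ u).edges = [] := rfl
@[simp] theorem ofVtx_src (u : Γ.V) : (ofVtx Γ u).src = u := rfl
@[simp] theorem ofVtx_rng (u : Γ.V) : (ofVtx Γ u).rng = u := rfl
@[simp] theorem ofEdge_edges (e : Γ.E) : (ofEdge Γ e).edges = [e] := rfl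
@[simp] theorem ofEdge_src (e : Γ.E) : (ofEdge Γ e).src = Γ.s e := rfl

@[simp] theorem comp_edges (x y : FinPath Γ) (h : x.src = y.rng) :
    (FinPath.comp Γ x y h).edges = x.edges ++ y.edges := rfl

@[simp] theorem comp_src (x y : FinPath Γ) (h : x.src = y.rng) :
    (FinPath.comp Γ x y h).src = y.src := rfl

theorem rng_of_edges_nil {Γ : DGraph} (x : FinPath Γ) (h : x.edges = []) : x.rng = x.src := by
  unfold FinPath.rng; rw [h]

theorem rng_of_edges_cons {Γ : DGraph} (x : FinPath Γ) (e : Γ.E) (L : List Γ.E)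
    (h : x.edges = e :: L) : x.rng = Γ.r e := by
  unfold FinPath.rng; rw [h]

theorem comp_rng (x y : FinPath Γ) (h : x.src = y.rng) :
    (FinPath.comp Γ x y h).rng = x.rng := by
  rcases hL : x.edges with _ | ⟨e, L⟩
  · rcases hM : y.edges with _ | ⟨f, M⟩
    · rw [rng_of_edges_nil _ (by simp [hL, hM]), rng_of_edges_nil x hL, comp_src, h,
        rng_of_edges_nil y hM]
    · rw [rng_of_edges_cons _ f (L := M) (by simp [hL, hM]), rng_of_edges_nil x hL, h,
        rng_of_edges_cons y f M hM]
  · rw [rng_of_edges_cons _ e (L := L ++ y.edges) (by simp [hL]), rng_of_edges_cons x e L hL]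

theorem comp_ofVtx_right {Γ : DGraph} (x : FinPath Γ) (u : Γ.V) (h : x.src = (ofVtx Γ u).rng) :
    FinPath.comp Γ x (ofVtx Γ u) h = x :=
  FinPath.ext' (by simp) (by simp at h ⊢; exact h.symm)

theorem comp_ofVtx_left {Γ : DGraph} (x : FinPath Γ) (u : Γ.V) (h : (ofVtx Γ u).src = x.rng) :
    FinPath.comp Γ (ofVtx Γ u) x h = x :=
  FinPath.ext' (by simp) rfl

theorem comp_assoc {Γ : DGraph} (x y z : FinPath Γ) (h1 : x.src = y.rng) (h2 : y.src = z.rng)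
    (h3 : (FinPath.comp Γ x y h1).src = z.rng) (h4 : x.src = (FinPath.comp Γ y z h2).rng) :
    FinPath.comp Γ (FinPath.comp Γ x y h1) z h3 = FinPath.comp Γ x (FinPath.comp Γ y z h2) h4 :=
  FinPath.ext' (by simp) rfl

end DGraph


namespace DGraph

variable (Γ : DGraph)

@[simp] theorem prependSeq_nil (σ : ℕ → Γ.E) : Γ.prependSeq [] σ = σ := by
  funext n; simp [prependSeq]

theorem prependSeq_lt (L : List Γ.E) (σ : ℕ → Γ.E) (n : ℕ) (h : n < L.length) :
    Γ.prependSeq L σ n = L.get ⟨n, h⟩ := dif_pos h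

theorem prependSeq_ge (L : List Γ.E) (σ : ℕ → Γ.E) (n : ℕ) (h : L.length ≤ n) :
    Γ.prependSeq L σ n = σ (n - L.length) := dif_neg (by omega)

theorem prependSeq_append (L₁ L₂ : List Γ.E) (σ : ℕ → Γ.E) :
    Γ.prependSeq (L₁ ++ L₂) σ = Γ.prependSeq L₁ (Γ.prependSeq L₂ σ) := by
  funext n
  by_cases h1 : n < L₁.length
  · rw [Γ.prependSeq_lt _ _ _ h1, Γ.prependSeq_lt _ _ _ (by simp; omega)]
    simp only [List.get_eq_getElem]
    exact List.getElem_append_left h1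
  · rw [Γ.prependSeq_ge L₁ _ _ (by omega)]
    by_cases h2 : n < L₁.length + L₂.length
    · rw [Γ.prependSeq_lt _ _ _ (by simp; omega), Γ.prependSeq_lt _ _ _ (by omega)]
      simp only [List.get_eq_getElem]
      rw [List.getElem_append_right (by omega)]
    · rw [Γ.prependSeq_ge _ _ _ (by simp; omega), Γ.prependSeq_ge _ _ _ (by omega)]
      congr 1; simp only [List.length_append]; omega

theorem InfPath.ext' {Γ : DGraph} {p q : InfPath Γ} (h : p.seq = q.seq) : p = q := by
  cases p; cases q; cases h; rfl

theorem cons_ofVtx {Γ : DGraph} (u : Γ.V) (z : BPath Γ) (h : (ofVtx Γ u).src = z.rng) :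
    BPath.cons Γ (ofVtx Γ u) z h = z := by
  cases z with
  | fin p hp => rfl
  | inf p =>
    exact congrArg BPath.inf (InfPath.ext' (Γ.prependSeq_nil p.seq))

theorem cons_rng {Γ : DGraph} (x : FinPath Γ) (z : BPath Γ) (h : x.src = z.rng) :
    (BPath.cons Γ x z h).rng = x.rng := by
  rcases x with ⟨Lx, vx, hcx⟩
  cases z with
  | fin p hp =>
    cases Lx with
    | nil =>
      show p.rng = vx
      exact h.symm
    | cons e L => rfl
  | inf p =>
    cases Lx with
    | nil =>
      show Γ.r (Γ.prependSeq [] p.seq 0) = vx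
      rw [Γ.prependSeq_nil]
      exact h.symm
    | cons e L =>
      show Γ.r (Γ.prependSeq (e :: L) p.seq 0) = Γ.r e
      rw [Γ.prependSeq_lt _ _ 0 (by simp)]
      rfl

theorem cons_comp {Γ : DGraph} (x y : FinPath Γ) (z : BPath Γ) (h1 : x.src = y.rng)
    (h2 : y.src = z.rng) (h3 : (FinPath.comp Γ x y h1).src = z.rng)
    (h4 : x.src = (BPath.cons Γ y z h2).rng) :
    BPath.cons Γ (FinPath.comp Γ x y h1) z h3 = BPath.cons Γ x (BPath.cons Γ y z h2) h4 := by
  cases z with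
  | fin p hp =>
    show BPath.fin _ _ = BPath.fin _ _
    congr 1
    exact FinPath.ext' (by simp) rfl
  | inf p =>
    show BPath.inf _ = BPath.inf _
    congr 1
    cases p with
    | mk σ hσ =>
      congr 1
      exact Γ.prependSeq_append x.edges y.edges σ

theorem cons_cancel {Γ : DGraph} (x : FinPath Γ) (z z' : BPath Γ) (h : x.src = z.rng)
    (h' : x.src = z'.rng) (heq : BPath.cons Γ x z h = BPath.cons Γ x z' h') : z = z' := by
  cases z with
  | fin p hp =>
    cases z' with
    | fin p' hp' =>
      simp only [BPath.cons, BPath.fin.injEq] at heq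
      have h1 : x.edges ++ p.edges = x.edges ++ p'.edges :=
        congrArg (fun q : FinPath Γ => q.edges) heq
      have h2 := congrArg (fun q : FinPath Γ => q.src) heq
      have : p = p' := FinPath.ext' (List.append_cancel_left h1) h2
      subst this; rfl
    | inf p' => cases heq
  | inf p =>
    cases z' with
    | fin p' hp' => cases heq
    | inf p' =>
      simp only [BPath.cons, BPath.inf.injEq] at heq
      have h1 : Γ.prependSeq x.edges p.seq = Γ.prependSeq x.edges p'.seq :=
        congrArg InfPath.seq heq
      have h2 : p.seq = p'.seq := by
        funext n
        have := congrFun h1 (n + x.edges.length)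
        rwa [Γ.prependSeq_ge _ _ _ (by omega), Γ.prependSeq_ge _ _ _ (by omega),
          Nat.add_sub_cancel] at this
      exact congrArg BPath.inf (InfPath.ext' h2)

end DGraph


namespace DGraph

variable (Γ : DGraph)

theorem compat_tail {Γ : DGraph} {e : Γ.E} {L : List Γ.E} {v : Γ.V}
    (h : Γ.compat (e :: L) v) : Γ.compat L v := by
  cases L with
  | nil => trivial
  | cons f M => exact h.2

theorem compat_drop {Γ : DGraph} {L : List Γ.E} {v : Γ.V} (h : Γ.compat L v) (n : ℕ) :
    Γ.compat (L.drop n) v := by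
  induction n generalizing L with
  | zero => exact h
  | succ m ih =>
    cases L with
    | nil => trivial
    | cons e M => exact ih (compat_tail h)

/-- Lemma B: cons is injective in the finite part when lengths agree. -/
theorem cons_inj_of_length {Γ : DGraph} {x x' : FinPath Γ} {z z' : BPath Γ}
    {h : x.src = z.rng} {h' : x'.src = z'.rng}
    (heq : BPath.cons Γ x z h = BPath.cons Γ x' z' h')
    (hlen : x.edges.length = x'.edges.length) : x = x' ∧ z = z' := by
  cases z with
  | fin p hp =>
    cases z' with
    | fin p' hp' =>
      simp only [BPath.cons, BPath.fin.injEq] at heq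
      have h1 : x.edges ++ p.edges = x'.edges ++ p'.edges :=
        congrArg (fun q : FinPath Γ => q.edges) heq
      have h2 := congrArg (fun q : FinPath Γ => q.src) heq
      obtain ⟨hx, hpj⟩ := List.append_inj h1 hlen
      have hp2 : p = p' := FinPath.ext' hpj h2
      subst hp2
      refine ⟨FinPath.ext' hx ?_, rfl⟩
      rw [h, h']
    | inf p' => cases heq
  | inf p =>
    cases z' with
    | fin p' hp' => cases heq
    | inf p' =>
      simp only [BPath.cons, BPath.inf.injEq] at heq
      have h1 : Γ.prependSeq x.edges p.seq = Γ.prependSeq x'.edges p'.seq :=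
        congrArg InfPath.seq heq
      have hseq : p.seq = p'.seq := by
        funext m
        have := congrFun h1 (m + x.edges.length)
        rwa [Γ.prependSeq_ge _ _ _ (by omega), Γ.prependSeq_ge _ _ _ (by omega),
          Nat.add_sub_cancel, hlen, Nat.add_sub_cancel] at this
      have hp2 : p = p' := InfPath.ext' hseq
      subst hp2
      refine ⟨FinPath.ext' ?_ ?_, rfl⟩
      · refine List.ext_get hlen ?_
        intro i hi hi'
        have := congrFun h1 i
        rwa [Γ.prependSeq_lt _ _ _ hi, Γ.prependSeq_lt _ _ _ hi'] at this
      · rw [h, h']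

/-- Lemma C': a `cons` equality with shorter first path yields a prefix. -/
theorem cons_prefix {Γ : DGraph} {x x' : FinPath Γ} {z z' : BPath Γ}
    {h : x.src = z.rng} {h' : x'.src = z'.rng}
    (heq : BPath.cons Γ x z h = BPath.cons Γ x' z' h')
    (hlen : x.edges.length ≤ x'.edges.length) : IsPrefix Γ x x' := by
  set n := x.edges.length with hn
  -- first: x.edges = x'.edges.take n
  have htake : x.edges = x'.edges.take n := by
    cases z with
    | fin p hp =>
      cases z' with
      | fin p' hp' =>
        simp only [BPath.cons, BPath.fin.injEq] at heq
        have h1 : x.edges ++ p.edges = x'.edges ++ p'.edges :=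
          congrArg (fun q : FinPath Γ => q.edges) heq
        have := congrArg (fun L => List.take n L) h1
        simpa [List.take_left' hn.symm, List.take_append_of_le_length hlen] using this
      | inf p' => cases heq
    | inf p =>
      cases z' with
      | fin p' hp' => cases heq
      | inf p' =>
        simp only [BPath.cons, BPath.inf.injEq] at heq
        have h1 : Γ.prependSeq x.edges p.seq = Γ.prependSeq x'.edges p'.seq :=
          congrArg InfPath.seq heq
        refine List.ext_get (by simp [hn]; omega) ?_
        intro i hi hi'
        have := congrFun h1 i
        rw [Γ.prependSeq_lt _ _ _ hi, Γ.prependSeq_lt _ _ _ (by omega)] at this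
        simp only [List.get_eq_getElem, List.getElem_take]
        exact this
  have happ : x'.edges = x.edges ++ x'.edges.drop n := by
    rw [htake, List.take_append_drop]
  set D := x'.edges.drop n with hD
  have hcD : Γ.compat D x'.src := compat_drop x'.ok n
  set y : FinPath Γ := ⟨D, x'.src, hcD⟩ with hy
  have hxy : x.src = y.rng := by
    rcases hDc : D with _ | ⟨e, D'⟩
    · -- x.edges = x'.edges, so z.rng = z'.rng
      have hxe : x.edges = x'.edges := by
        rw [happ, hDc, List.append_nil]
      have hlen' : x.edges.length = x'.edges.length := by rw [hxe]
      obtain ⟨hxx, hzz⟩ := cons_inj_of_length heq hlen'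
      have : y.rng = y.src := rng_of_edges_nil y (by simp [hy, hDc])
      rw [this]
      show x.src = x'.src
      rw [congrArg FinPath.src hxx]
    · have hyr : y.rng = Γ.r e := rng_of_edges_cons y e D' (by simp [hy, hDc])
      rw [hyr, h]
      -- z.rng = r e
      cases z with
      | fin p hp =>
        cases z' with
        | fin p' hp' =>
          simp only [BPath.cons, BPath.fin.injEq] at heq
          have h1 : x.edges ++ p.edges = x'.edges ++ p'.edges :=
            congrArg (fun q : FinPath Γ => q.edges) heq
          rw [happ, List.append_assoc] at h1
          have hpe : p.edges = D ++ p'.edges := List.append_cancel_left h1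
          show p.rng = Γ.r e
          exact rng_of_edges_cons p e (D' ++ p'.edges) (by rw [hpe, hDc]; simp)
        | inf p' => cases heq
      | inf p =>
        cases z' with
        | fin p' hp' => cases heq
        | inf p' =>
          simp only [BPath.cons, BPath.inf.injEq] at heq
          have h1 : Γ.prependSeq x.edges p.seq n = Γ.prependSeq x'.edges p'.seq n :=
            congrFun (congrArg InfPath.seq heq) n
          rw [Γ.prependSeq_ge _ _ _ (le_refl n), Nat.sub_self] at h1
          have hnlt : n < x'.edges.length := by
            by_contra hcon
            have : D = [] := by rw [hD, List.drop_eq_nil_of_le (by omega)]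
            rw [hDc] at this; cases this
          rw [Γ.prependSeq_lt _ _ _ hnlt] at h1
          have h2 : x'.edges[n]'hnlt = e := by
            rw [List.getElem_of_eq happ hnlt, List.getElem_append_right (le_refl n)]
            simp [hDc, hn]
          show Γ.r (p.seq 0) = Γ.r e
          rw [h1]
          simp only [List.get_eq_getElem]
          rw [h2]
  exact ⟨y, hxy, FinPath.ext' (by simp [hy, happ]) rfl⟩

end DGraph


namespace DGraph

theorem compat_of_forall (Γ : DGraph) (L : List Γ.E) (v : Γ.V)
    (hstep : ∀ i (h : i + 1 < L.length), Γ.s (L[i]'(by omega)) = Γ.r (L[i+1]'h))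
    (hlast : ∀ h : 0 < L.length, Γ.s (L[L.length - 1]'(by omega)) = v) :
    Γ.compat L v := by
  induction L with
  | nil => trivial
  | cons e M ih =>
    cases M with
    | nil =>
      show Γ.s e = v
      simpa using hlast (by simp)
    | cons f K =>
      refine ⟨by simpa using hstep 0 (by simp), ?_⟩
      apply ih
      · intro i hi
        have := hstep (i + 1) (by simpa using Nat.succ_lt_succ hi)
        simpa using this
      · intro hpos
        have := hlast (by simp)
        simpa [Nat.succ_sub_one] using this

open Classical in
/-- The auxiliary vertex sequence used to build a boundary path from `u`. -/
noncomputable def vseq (Γ : DGraph) (u : Γ.V) : ℕ → Γ.V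
  | 0 => u
  | n + 1 => if h : Γ.Regular (vseq Γ u n) then Γ.s h.2.choose else vseq Γ u n

/-- Every vertex is the range of some boundary path. -/
theorem rng_eq_of_head {Γ : DGraph} (x : FinPath Γ) (h : 0 < x.edges.length) :
    x.rng = Γ.r (x.edges[0]'h) := by
  rcases x with ⟨L, v, hc⟩
  cases L with
  | nil => simp at h
  | cons e M => rfl

theorem exists_bpath_rng (Γ : DGraph) (u : Γ.V) : ∃ z : BPath Γ, z.rng = u := by
  classical
  by_cases hall : ∀ n, Γ.Regular (vseq Γ u n)
  · -- infinite path
    refine ⟨BPath.inf ⟨fun n => (hall n).2.choose, ?_⟩, ?_⟩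
    · intro n
      have h1 : vseq Γ u (n + 1) = Γ.s (hall n).2.choose := by
        simp only [vseq]
        exact dif_pos (hall n)
      have h2 : Γ.r (hall (n + 1)).2.choose = vseq Γ u (n + 1) := (hall (n + 1)).2.choose_spec
      rw [h2, h1]
    · show Γ.r (hall 0).2.choose = u
      exact (hall 0).2.choose_spec
  · push_neg at hall
    have hN : ∃ n, ¬ Γ.Regular (vseq Γ u n) := hall
    haveI hdec : DecidablePred fun n => ¬ Γ.Regular (vseq Γ u n) :=
      fun _ => Classical.propDecidable _
    set N := @Nat.find (fun n => ¬ Γ.Regular (vseq Γ u n)) hdec hN with hNdef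
    have hreg : ∀ i, i < N → Γ.Regular (vseq Γ u i) := by
      intro i hi
      by_contra hcon
      have := Nat.find_le (h := hN) hcon
      omega
    have hsing : ¬ Γ.Regular (vseq Γ u N) := @Nat.find_spec _ hdec hN
    set L : List Γ.E := List.ofFn (fun i : Fin N => (hreg i i.2).2.choose) with hL
    have hLlen : L.length = N := by simp [hL]
    have hget : ∀ i (hi : i < N), L[i]'(by omega) = (hreg i hi).2.choose := by
      intro i hi
      simp [hL]
    have hrr : ∀ i (hi : i < N), Γ.r ((hreg i hi).2.choose) = vseq Γ u i :=
      fun i hi => (hreg i hi).2.choose_spec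
    have hss : ∀ i (hi : i < N), Γ.s ((hreg i hi).2.choose) = vseq Γ u (i + 1) := by
      intro i hi
      simp only [vseq]
      rw [dif_pos (hreg i hi)]
    have hcL : Γ.compat L (vseq Γ u N) := by
      apply compat_of_forall
      · intro i hi
        rw [hget i (by omega), hget (i + 1) (by omega), hss i (by omega),
          hrr (i + 1) (by omega)]
      · intro hpos
        have h1 : L.length - 1 < N := by omega
        rw [hget (L.length - 1) h1, hss (L.length - 1) h1]
        congr 1
        omega
    refine ⟨BPath.fin ⟨L, vseq Γ u N, hcL⟩ hsing, ?_⟩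
    show FinPath.rng Γ ⟨L, vseq Γ u N, hcL⟩ = u
    by_cases hN0 : N = 0
    · have hLnil : L = [] := List.length_eq_zero_iff.mp (by omega)
      rw [rng_of_edges_nil _ hLnil]
      show vseq Γ u N = u
      rw [hN0]
      simp [vseq]
    · have h0 : 0 < N := by omega
      rw [rng_eq_of_head _ (show 0 < L.length by omega)]
      show Γ.r (L[0]'(by omega)) = u
      rw [hget 0 h0, hrr 0 h0]
      simp [vseq]

theorem cylV_nonempty (Γ : DGraph) (u : Γ.V) : (cylV Γ u).Nonempty := by
  obtain ⟨z, hz⟩ := exists_bpath_rng Γ u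
  exact ⟨z, hz⟩

end DGraph


namespace DGraph

theorem mem_cylV {Γ : DGraph} {z : BPath Γ} {u : Γ.V} : z ∈ cylV Γ u ↔ z.rng = u := Iff.rfl

theorem cylV_eq_cyl (Γ : DGraph) (u : Γ.V) : cylV Γ u = cyl Γ (ofVtx Γ u) := by
  ext z
  constructor
  · intro hz
    exact ⟨z, hz.symm, (cons_ofVtx u z hz.symm).symm⟩
  · rintro ⟨z', h, rfl⟩
    rw [mem_cylV, cons_rng]
    rfl

theorem isOpen_cylV (Γ : DGraph) (u : Γ.V) : IsOpen (cylV Γ u) := by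
  rw [cylV_eq_cyl]
  apply TopologicalSpace.isOpen_generateFrom_of_mem
  refine ⟨ofVtx Γ u, ∅, Set.finite_empty, ?_⟩
  simp

theorem unit_mem_GArr (Γ : DGraph) (w : BPath Γ) : (w, (0 : ℤ), w) ∈ GArr Γ := by
  refine ⟨ofVtx Γ w.rng, ofVtx Γ w.rng, w, rfl, rfl, ?_, ?_, by simp⟩
  · exact (cons_ofVtx w.rng w rfl).symm
  · exact (cons_ofVtx w.rng w rfl).symm

/-- The canonical element of `Z(x, s(x))` over a boundary path `z` with range
`s(x)`. -/
theorem exists_mem_ZZ_vtx {Γ : DGraph} (x : FinPath Γ) (z : BPath Γ) (hz : x.src = z.rng) :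
    ∃ t : GArrT Γ, t ∈ ZZ Γ x (ofVtx Γ x.src) ∧
      t.val = (BPath.cons Γ x z hz, (x.edges.length : ℤ), z) := by
  have hy : (ofVtx Γ x.src).src = z.rng := hz
  have hmem : (BPath.cons Γ x z hz, ((x.edges.length : ℤ) - (ofVtx Γ x.src).edges.length),
      BPath.cons Γ (ofVtx Γ x.src) z hy) ∈ GArr Γ :=
    ⟨x, ofVtx Γ x.src, z, hz, hy, rfl, rfl, rfl⟩
  refine ⟨⟨_, hmem⟩, ⟨z, hz, hy, rfl⟩, ?_⟩
  simp only [cons_ofVtx, ofVtx_edges, List.length_nil, Nat.cast_zero, sub_zero]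

/-- The canonical element of `Z(x, y)` over a boundary path `z`. -/
theorem exists_mem_ZZ {Γ : DGraph} (x y : FinPath Γ) (z : BPath Γ) (hx : x.src = z.rng)
    (hy : y.src = z.rng) :
    ∃ t : GArrT Γ, t ∈ ZZ Γ x y ∧
      t.val = (BPath.cons Γ x z hx, ((x.edges.length : ℤ) - y.edges.length),
        BPath.cons Γ y z hy) := by
  have hmem : (BPath.cons Γ x z hx, ((x.edges.length : ℤ) - y.edges.length),
      BPath.cons Γ y z hy) ∈ GArr Γ := ⟨x, y, z, hx, hy, rfl, rfl, rfl⟩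
  exact ⟨⟨_, hmem⟩, ⟨z, hx, hy, rfl⟩, rfl⟩

theorem gmul_unitSet (Γ : DGraph) (A : Set (GArrT Γ)) (S : Set (BPath Γ)) :
    gmul Γ A (unitSet Γ S) = {a | a ∈ A ∧ gsrc Γ a ∈ S} := by
  ext c
  constructor
  · rintro ⟨a, ha, b, ⟨hb0, hbeq, hbS⟩, hlink, hc⟩
    have hceq : c = a := by
      apply Subtype.ext
      rw [hc, hb0, hbeq.symm, ← hlink, add_zero]
    subst hceq
    refine ⟨ha, ?_⟩
    show c.val.2.2 ∈ S
    rw [hlink]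
    exact hbS
  · rintro ⟨ha, hs⟩
    refine ⟨c, ha, ⟨(gsrc Γ c, 0, gsrc Γ c), unit_mem_GArr Γ _⟩, ⟨rfl, rfl, hs⟩, rfl, ?_⟩
    show c.val = (c.val.1, c.val.2.1 + 0, c.val.2.2)
    rw [add_zero]

end DGraph


namespace DGraph

/-- The vertex relation extracted from a dynamical Cuntz--Krieger family. -/
def DCKRel0 (Γ₁ Γ₂ : DGraph) (Ω : Γ₂.V → Set (BPath Γ₁)) (u : Γ₁.V) (v : Γ₂.V) : Prop :=
  cylV Γ₁ u ∩ Ω v = cylV Γ₁ u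

/-- The edge relation extracted from a dynamical Cuntz--Krieger family. -/
def DCKRel1 (Γ₁ Γ₂ : DGraph) (T : Γ₂.E → Set (GArrT Γ₁)) (x : FinPath Γ₁) (f : Γ₂.E) : Prop :=
  {a | a ∈ T f ∧ gsrc Γ₁ a ∈ cylV Γ₁ x.src} = ZZ Γ₁ x (ofVtx Γ₁ x.src)

/-- The full relation generated by the vertex and edge relations. -/
def DCKRel (Γ₁ Γ₂ : DGraph) (Ω : Γ₂.V → Set (BPath Γ₁)) (T : Γ₂.E → Set (GArrT Γ₁)) :
    FinPath Γ₁ → List Γ₂.E → Γ₂.V → Prop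
  | x, [], v => x.edges = [] ∧ DCKRel0 Γ₁ Γ₂ Ω x.src v
  | x, f :: L, v => ∃ (x₁ x₂ : FinPath Γ₁) (h : x₁.src = x₂.rng),
      DCKRel1 Γ₁ Γ₂ T x₁ f ∧ DCKRel Γ₁ Γ₂ Ω T x₂ L v ∧ x = FinPath.comp Γ₁ x₁ x₂ h

section Core

variable {Γ₁ Γ₂ : DGraph} {Ω : Γ₂.V → Set (BPath Γ₁)} {T : Γ₂.E → Set (GArrT Γ₁)}

theorem rel0_iff {u : Γ₁.V} {v : Γ₂.V} :
    DCKRel0 Γ₁ Γ₂ Ω u v ↔ cylV Γ₁ u ⊆ Ω v := Set.inter_eq_left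

theorem rel0_of_mem
    (ha : ∀ (u : Γ₁.V) (v : Γ₂.V), cylV Γ₁ u ∩ Ω v = ∅ ∨ cylV Γ₁ u ∩ Ω v = cylV Γ₁ u)
    {u : Γ₁.V} {v : Γ₂.V} (h : (cylV Γ₁ u ∩ Ω v).Nonempty) : DCKRel0 Γ₁ Γ₂ Ω u v := by
  rcases ha u v with h0 | h0
  · rw [h0] at h; exact absurd h Set.not_nonempty_empty
  · exact h0

theorem rel1_TF {x : FinPath Γ₁} {f : Γ₂.E} (h : DCKRel1 Γ₁ Γ₂ T x f) :
    ZZ Γ₁ x (ofVtx Γ₁ x.src) ⊆ T f := by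
  rw [← h]; exact fun a ha => ha.1

theorem rel1_src {x : FinPath Γ₁} {f : Γ₂.E} (hsrc_eq : gsrc Γ₁ '' T f = Ω (Γ₂.s f))
    (h : DCKRel1 Γ₁ Γ₂ T x f) : DCKRel0 Γ₁ Γ₂ Ω x.src (Γ₂.s f) := by
  rw [rel0_iff]
  intro z hz
  obtain ⟨t, htZ, htv⟩ := exists_mem_ZZ_vtx x z (mem_cylV.mp hz).symm
  have htT : t ∈ T f := rel1_TF h htZ
  rw [← hsrc_eq]
  refine ⟨t, htT, ?_⟩
  show t.val.2.2 = z
  rw [htv]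

theorem rel1_rng
    (ha : ∀ (u : Γ₁.V) (v : Γ₂.V), cylV Γ₁ u ∩ Ω v = ∅ ∨ cylV Γ₁ u ∩ Ω v = cylV Γ₁ u)
    {x : FinPath Γ₁} {f : Γ₂.E} (hrng_sub : grng Γ₁ '' T f ⊆ Ω (Γ₂.r f))
    (h : DCKRel1 Γ₁ Γ₂ T x f) : DCKRel0 Γ₁ Γ₂ Ω x.rng (Γ₂.r f) := by
  obtain ⟨z, hz⟩ := cylV_nonempty Γ₁ x.src
  obtain ⟨t, htZ, htv⟩ := exists_mem_ZZ_vtx x z (mem_cylV.mp hz).symm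
  have htT : t ∈ T f := rel1_TF h htZ
  apply rel0_of_mem ha
  refine ⟨BPath.cons Γ₁ x z (mem_cylV.mp hz).symm, ?_, ?_⟩
  · rw [mem_cylV, cons_rng]
  · apply hrng_sub
    refine ⟨t, htT, ?_⟩
    show t.val.1 = _
    rw [htv]

theorem rel1_inj_src {x x' : FinPath Γ₁} {f : Γ₂.E} (h : DCKRel1 Γ₁ Γ₂ T x f)
    (h' : DCKRel1 Γ₁ Γ₂ T x' f) (hs : x.src = x'.src) : x = x' := by
  have hzz : ZZ Γ₁ x (ofVtx Γ₁ x.src) = ZZ Γ₁ x' (ofVtx Γ₁ x'.src) := by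
    rw [← h, ← h', hs]
  obtain ⟨z, hz⟩ := cylV_nonempty Γ₁ x.src
  obtain ⟨t, htZ, htv⟩ := exists_mem_ZZ_vtx x z (mem_cylV.mp hz).symm
  rw [hzz] at htZ
  obtain ⟨z', hx', hy', hval⟩ := htZ
  rw [htv] at hval
  have h3 : z = BPath.cons Γ₁ (ofVtx Γ₁ x'.src) z' hy' := congrArg (fun q => q.2.2) hval
  rw [cons_ofVtx] at h3
  subst h3
  have h2 : (x.edges.length : ℤ) = (x'.edges.length : ℤ) - (ofVtx Γ₁ x'.src).edges.length :=
    congrArg (fun q => q.2.1) hval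
  simp only [ofVtx_edges, List.length_nil, Nat.cast_zero, sub_zero] at h2
  have hlen : x.edges.length = x'.edges.length := by exact_mod_cast h2
  have h1 : BPath.cons Γ₁ x z (mem_cylV.mp hz).symm = BPath.cons Γ₁ x' z hx' :=
    congrArg (fun q => q.1) hval
  exact (cons_inj_of_length h1 hlen).1

theorem rel1_of_src_nonempty
    (hb : ∀ (u : Γ₁.V) (f : Γ₂.E),
      gmul Γ₁ (T f) (unitSet Γ₁ (cylV Γ₁ u)) = ∅ ∨
      ∃ x : FinPath Γ₁,
        gmul Γ₁ (T f) (unitSet Γ₁ (cylV Γ₁ u)) = ZZ Γ₁ x (ofVtx Γ₁ x.src))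
    {u : Γ₁.V} {f : Γ₂.E} (hne : ∃ a, a ∈ T f ∧ gsrc Γ₁ a ∈ cylV Γ₁ u) :
    ∃ x : FinPath Γ₁, DCKRel1 Γ₁ Γ₂ T x f ∧ x.src = u := by
  rcases hb u f with h0 | ⟨x, hx⟩
  · rw [gmul_unitSet] at h0
    obtain ⟨a, ha⟩ := hne
    have : a ∈ ({a | a ∈ T f ∧ gsrc Γ₁ a ∈ cylV Γ₁ u} : Set (GArrT Γ₁)) := ha
    rw [h0] at this
    exact absurd this (Set.notMem_empty a)
  · rw [gmul_unitSet] at hx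
    have hsrc : x.src = u := by
      obtain ⟨z, hz⟩ := cylV_nonempty Γ₁ x.src
      obtain ⟨t, htZ, htv⟩ := exists_mem_ZZ_vtx x z (mem_cylV.mp hz).symm
      rw [← hx] at htZ
      have : gsrc Γ₁ t ∈ cylV Γ₁ u := htZ.2
      have h2 : gsrc Γ₁ t = z := by show t.val.2.2 = z; rw [htv]
      rw [h2, mem_cylV] at this
      rw [← this, ← hz]
    refine ⟨x, ?_, hsrc⟩
    unfold DCKRel1
    rw [show cylV Γ₁ x.src = cylV Γ₁ u from congrArg (cylV Γ₁) hsrc]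
    exact hx

theorem rel1_exists
    (hb : ∀ (u : Γ₁.V) (f : Γ₂.E),
      gmul Γ₁ (T f) (unitSet Γ₁ (cylV Γ₁ u)) = ∅ ∨
      ∃ x : FinPath Γ₁,
        gmul Γ₁ (T f) (unitSet Γ₁ (cylV Γ₁ u)) = ZZ Γ₁ x (ofVtx Γ₁ x.src))
    {f : Γ₂.E} {a : GArrT Γ₁} (haT : a ∈ T f) :
    ∃ x : FinPath Γ₁, DCKRel1 Γ₁ Γ₂ T x f ∧ x.src = (gsrc Γ₁ a).rng ∧
      a ∈ ZZ Γ₁ x (ofVtx Γ₁ x.src) := by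
  obtain ⟨x, h1, h2⟩ := rel1_of_src_nonempty hb ⟨a, haT, rfl⟩
  refine ⟨x, h1, h2, ?_⟩
  rw [← h1]
  exact ⟨haT, by rw [h2]; rfl⟩

end Core

end DGraph


namespace DGraph

section Core

variable {Γ₁ Γ₂ : DGraph} {Ω : Γ₂.V → Set (BPath Γ₁)} {T : Γ₂.E → Set (GArrT Γ₁)}

theorem mono_one
    (hrng_disj : ∀ f g, f ≠ g → grng Γ₁ '' T f ∩ grng Γ₁ '' T g = ∅)
    (hinj_r : ∀ f, Set.InjOn (grng Γ₁) (T f))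
    {x x' : FinPath Γ₁} {f f' : Γ₂.E} (h : DCKRel1 Γ₁ Γ₂ T x f)
    (h' : DCKRel1 Γ₁ Γ₂ T x' f') (hpre : IsPrefix Γ₁ x x') : x = x' ∧ f = f' := by
  obtain ⟨y, hy, rfl⟩ := hpre
  obtain ⟨z', hz'⟩ := cylV_nonempty Γ₁ (FinPath.comp Γ₁ x y hy).src
  rw [mem_cylV, comp_src] at hz'
  have hyz : y.src = z'.rng := hz'.symm
  set z : BPath Γ₁ := BPath.cons Γ₁ y z' hyz with hzdef
  have hxz : x.src = z.rng := by rw [hzdef, cons_rng]; exact hy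
  obtain ⟨t, htZ, htv⟩ := exists_mem_ZZ_vtx x z hxz
  have htT : t ∈ T f := rel1_TF h htZ
  have hcz : (FinPath.comp Γ₁ x y hy).src = z'.rng := by rw [comp_src]; exact hyz
  obtain ⟨t', htZ', htv'⟩ := exists_mem_ZZ_vtx (FinPath.comp Γ₁ x y hy) z' hcz
  have htT' : t' ∈ T f' := rel1_TF h' htZ'
  have hrng : grng Γ₁ t = grng Γ₁ t' := by
    show t.val.1 = t'.val.1
    rw [htv, htv']
    exact cons_comp x y z' hy hyz hcz hxz ▸ rfl
  have hff : f = f' := by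
    by_contra hne
    have := hrng_disj f f' hne
    have hmem : grng Γ₁ t ∈ grng Γ₁ '' T f ∩ grng Γ₁ '' T f' :=
      ⟨⟨t, htT, rfl⟩, ⟨t', htT', hrng.symm⟩⟩
    rw [this] at hmem
    exact absurd hmem (Set.notMem_empty _)
  subst hff
  have htt : t = t' := hinj_r f htT htT' hrng
  rw [htt, htv'] at htv
  have h2 : ((FinPath.comp Γ₁ x y hy).edges.length : ℤ) = (x.edges.length : ℤ) :=
    congrArg (fun q => q.2.1) htv
  have hylen : y.edges.length = 0 := by
    simp only [comp_edges, List.length_append, Nat.cast_add] at h2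
    omega
  have hynil : y.edges = [] := List.length_eq_zero_iff.mp hylen
  have hxy : FinPath.comp Γ₁ x y hy = x := by
    apply FinPath.ext'
    · simp [hynil]
    · rw [comp_src, hy, rng_of_edges_nil y hynil]
  exact ⟨hxy.symm, rfl⟩

theorem regular_core
    (ha : ∀ (u : Γ₁.V) (v : Γ₂.V), cylV Γ₁ u ∩ Ω v = ∅ ∨ cylV Γ₁ u ∩ Ω v = cylV Γ₁ u)
    (hb : ∀ (u : Γ₁.V) (f : Γ₂.E),
      gmul Γ₁ (T f) (unitSet Γ₁ (cylV Γ₁ u)) = ∅ ∨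
      ∃ x : FinPath Γ₁,
        gmul Γ₁ (T f) (unitSet Γ₁ (cylV Γ₁ u)) = ZZ Γ₁ x (ofVtx Γ₁ x.src))
    (hreg : ∀ v, Γ₂.Regular v → (⋃ f ∈ {f | Γ₂.r f = v}, grng Γ₁ '' T f) = Ω v)
    {v : Γ₂.V} (hv : Γ₂.Regular v) {u : Γ₁.V} (h0 : DCKRel0 Γ₁ Γ₂ Ω u v)
    {x : FinPath Γ₁} (hx : x.rng = u) :
    ∃ (f : Γ₂.E) (x' : FinPath Γ₁), Γ₂.r f = v ∧ DCKRel1 Γ₁ Γ₂ T x' f ∧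
      (IsPrefix Γ₁ x x' ∨ IsPrefix Γ₁ x' x) := by
  obtain ⟨z, hz⟩ := cylV_nonempty Γ₁ x.src
  have hxz : x.src = z.rng := (mem_cylV.mp hz).symm
  set w : BPath Γ₁ := BPath.cons Γ₁ x z hxz with hwdef
  have hw : w ∈ Ω v := by
    apply rel0_iff.mp h0
    rw [mem_cylV, hwdef, cons_rng, hx]
  rw [← hreg v hv] at hw
  simp only [Set.mem_iUnion, Set.mem_setOf_eq] at hw
  obtain ⟨f, hf, a, haT, hav⟩ := hw
  obtain ⟨x'', h1, h2, h3⟩ := rel1_exists hb haT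
  obtain ⟨z'', hx'', hy'', hval''⟩ := h3
  have hrng : BPath.cons Γ₁ x'' z'' hx'' = w := by
    rw [← hav]; show _ = a.val.1; rw [hval'']
  rw [hwdef] at hrng
  rcases le_total x''.edges.length x.edges.length with hle | hle
  · exact ⟨f, x'', hf, h1, Or.inr (cons_prefix hrng hle)⟩
  · exact ⟨f, x'', hf, h1, Or.inl (cons_prefix hrng.symm hle)⟩

theorem finite0 (hcomp : ∀ v, IsCompact (Ω v)) (v : Γ₂.V) :
    {u : Γ₁.V | DCKRel0 Γ₁ Γ₂ Ω u v}.Finite := by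
  have hcover : Ω v ⊆ ⋃ u : Γ₁.V, cylV Γ₁ u := by
    intro z _
    exact Set.mem_iUnion.mpr ⟨z.rng, rfl⟩
  obtain ⟨t, ht⟩ := (hcomp v).elim_finite_subcover (fun u => cylV Γ₁ u)
    (fun u => isOpen_cylV Γ₁ u) hcover
  apply Set.Finite.subset t.finite_toSet
  intro u hu
  obtain ⟨z, hz⟩ := cylV_nonempty Γ₁ u
  have hzΩ : z ∈ Ω v := rel0_iff.mp hu hz
  have := ht hzΩ
  simp only [Set.mem_iUnion] at this
  obtain ⟨u', hu', hz'⟩ := this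
  rw [mem_cylV] at hz hz'
  rwa [← hz, hz']

theorem finite1 (hcomp : ∀ v, IsCompact (Ω v))
    (hsrc_eq : ∀ f, gsrc Γ₁ '' T f = Ω (Γ₂.s f)) (f : Γ₂.E) :
    {x : FinPath Γ₁ | DCKRel1 Γ₁ Γ₂ T x f}.Finite := by
  apply Set.Finite.of_finite_image (f := fun x : FinPath Γ₁ => x.src)
  · apply Set.Finite.subset (finite0 (Ω := Ω) hcomp (Γ₂.s f))
    rintro u ⟨x, hx, rfl⟩
    exact rel1_src (hsrc_eq f) hx
  · intro x hx x' hx' hs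
    exact rel1_inj_src hx hx' hs

end Core

end DGraph


namespace DGraph

section Core

variable {Γ₁ Γ₂ : DGraph} {Ω : Γ₂.V → Set (BPath Γ₁)} {T : Γ₂.E → Set (GArrT Γ₁)}

theorem gmul_ZZ_eq {x₀ x : FinPath Γ₁} {f : Γ₂.E} (h1 : DCKRel1 Γ₁ Γ₂ T x₀ f)
    (hs : x.src = x₀.src) :
    gmul Γ₁ (T f) (ZZ Γ₁ (ofVtx Γ₁ x.src) x) =
      {c : GArrT Γ₁ | ∃ (z : BPath Γ₁) (h₀ : x₀.src = z.rng) (h₁ : x.src = z.rng),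
        c.val = (BPath.cons Γ₁ x₀ z h₀,
          (x₀.edges.length : ℤ) - (x.edges.length : ℤ), BPath.cons Γ₁ x z h₁)} := by
  ext c
  constructor
  · rintro ⟨a, haT, b, ⟨z, hbx, hby, hbval⟩, hlink, hc⟩
    have hb1 : b.val.1 = z := by rw [hbval]; exact cons_ofVtx _ z hbx
    have hsrca : gsrc Γ₁ a ∈ cylV Γ₁ x₀.src := by
      show a.val.2.2 ∈ _
      rw [hlink, hb1, mem_cylV, ← hbx]
      show x.src = x₀.src
      exact hs
    have haZ : a ∈ ZZ Γ₁ x₀ (ofVtx Γ₁ x₀.src) := by rw [← h1]; exact ⟨haT, hsrca⟩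
    obtain ⟨z₂, hax, hay, haval⟩ := haZ
    have hz₂ : z₂ = z := by
      have := hlink
      rw [hb1, haval] at this
      have h2 : BPath.cons Γ₁ (ofVtx Γ₁ x₀.src) z₂ hay = z := this
      rwa [cons_ofVtx] at h2
    subst hz₂
    refine ⟨z₂, hax, hby, ?_⟩
    rw [hc, haval, hbval]
    refine Prod.ext rfl (Prod.ext ?_ rfl)
    show (x₀.edges.length : ℤ) - (ofVtx Γ₁ x₀.src).edges.length +
      ((ofVtx Γ₁ x.src).edges.length - (x.edges.length : ℤ)) = _
    simp only [ofVtx_edges, List.length_nil, Nat.cast_zero]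
    omega
  · rintro ⟨z, h₀, h₁, hcval⟩
    obtain ⟨t, htZ, htv⟩ := exists_mem_ZZ_vtx x₀ z h₀
    have htT : t ∈ T f := rel1_TF h1 htZ
    have hbx : (ofVtx Γ₁ x.src).src = z.rng := h₁
    obtain ⟨b, hbZ, hbv⟩ := exists_mem_ZZ (ofVtx Γ₁ x.src) x z hbx h₁
    refine ⟨t, htT, b, hbZ, ?_, ?_⟩
    · show t.val.2.2 = b.val.1
      rw [htv, hbv]
      exact (cons_ofVtx _ z hbx).symm
    · rw [hcval, htv, hbv]
      refine Prod.ext rfl (Prod.ext ?_ rfl)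
      show (x₀.edges.length : ℤ) - (x.edges.length : ℤ) =
        (x₀.edges.length : ℤ) + ((ofVtx Γ₁ x.src).edges.length - (x.edges.length : ℤ))
      simp only [ofVtx_edges, List.length_nil, Nat.cast_zero]
      omega

theorem rel1_iff_gmul
    (hb : ∀ (u : Γ₁.V) (f : Γ₂.E),
      gmul Γ₁ (T f) (unitSet Γ₁ (cylV Γ₁ u)) = ∅ ∨
      ∃ x : FinPath Γ₁,
        gmul Γ₁ (T f) (unitSet Γ₁ (cylV Γ₁ u)) = ZZ Γ₁ x (ofVtx Γ₁ x.src))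
    {x : FinPath Γ₁} {f : Γ₂.E} :
    DCKRel1 Γ₁ Γ₂ T x f ↔ gmul Γ₁ (T f) (ZZ Γ₁ (ofVtx Γ₁ x.src) x) = ZZ Γ₁ x x := by
  constructor
  · intro h
    rw [gmul_ZZ_eq h rfl]
    rfl
  · intro hg
    -- nonemptiness of the source set
    obtain ⟨z₀, hz₀⟩ := cylV_nonempty Γ₁ x.src
    have hxz₀ : x.src = z₀.rng := (mem_cylV.mp hz₀).symm
    obtain ⟨c, hcZ, hcv⟩ := exists_mem_ZZ x x z₀ hxz₀ hxz₀
    rw [← hg] at hcZ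
    obtain ⟨a, haT, b, ⟨z₁, hbx, hby, hbval⟩, hlink, hc⟩ := hcZ
    have hne : ∃ a, a ∈ T f ∧ gsrc Γ₁ a ∈ cylV Γ₁ x.src := by
      refine ⟨a, haT, ?_⟩
      show a.val.2.2 ∈ _
      rw [hlink, hbval]
      show BPath.cons Γ₁ (ofVtx Γ₁ x.src) z₁ hbx ∈ _
      rw [cons_ofVtx, mem_cylV, ← hbx]
      rfl
    obtain ⟨x₀, h1, hx₀s⟩ := rel1_of_src_nonempty hb hne
    rw [gmul_ZZ_eq h1 hx₀s.symm] at hg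
    have h₀ : x₀.src = z₀.rng := by rw [hx₀s]; exact hxz₀
    obtain ⟨t, htZ, htv⟩ := exists_mem_ZZ x₀ x z₀ h₀ hxz₀
    have htmem : t ∈ {c : GArrT Γ₁ | ∃ (z : BPath Γ₁) (h₀ : x₀.src = z.rng)
        (h₁ : x.src = z.rng), c.val = (BPath.cons Γ₁ x₀ z h₀,
          (x₀.edges.length : ℤ) - (x.edges.length : ℤ), BPath.cons Γ₁ x z h₁)} :=
      ⟨z₀, h₀, hxz₀, htv⟩
    rw [hg] at htmem
    obtain ⟨z', hx', hy', hval⟩ := htmem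
    rw [htv] at hval
    have h3 : BPath.cons Γ₁ x z₀ hxz₀ = BPath.cons Γ₁ x z' hy' :=
      congrArg (fun q => q.2.2) hval
    have hz' : z₀ = z' := cons_cancel x z₀ z' hxz₀ hy' h3
    subst hz'
    have h2 : (x₀.edges.length : ℤ) - x.edges.length = (x.edges.length : ℤ) - x.edges.length :=
      congrArg (fun q => q.2.1) hval
    have hlen : x₀.edges.length = x.edges.length := by omega
    have hfst : BPath.cons Γ₁ x₀ z₀ h₀ = BPath.cons Γ₁ x z₀ hx' :=
      congrArg (fun q => q.1) hval
    have : x₀ = x := (cons_inj_of_length hfst hlen).1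
    subst this
    exact h1

end Core

end DGraph


namespace DGraph

section Core

variable {Γ₁ Γ₂ : DGraph} {Ω : Γ₂.V → Set (BPath Γ₁)} {T : Γ₂.E → Set (GArrT Γ₁)}

theorem rel_src {x : FinPath Γ₁} {L : List Γ₂.E} {v : Γ₂.V}
    (h : DCKRel Γ₁ Γ₂ Ω T x L v) : DCKRel0 Γ₁ Γ₂ Ω x.src v := by
  induction L generalizing x with
  | nil => exact h.2
  | cons f M ih =>
    obtain ⟨x₁, x₂, hh, h1, h2, rfl⟩ := h
    rw [comp_src]
    exact ih h2

theorem rel_vtx_rng {x : FinPath Γ₁} {v : Γ₂.V}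
    (h : DCKRel Γ₁ Γ₂ Ω T x [] v) : DCKRel0 Γ₁ Γ₂ Ω x.rng v := by
  rw [rng_of_edges_nil x h.1]
  exact h.2

theorem rel_cons_rng
    (ha : ∀ (u : Γ₁.V) (v : Γ₂.V), cylV Γ₁ u ∩ Ω v = ∅ ∨ cylV Γ₁ u ∩ Ω v = cylV Γ₁ u)
    (hrng_sub : ∀ f, grng Γ₁ '' T f ⊆ Ω (Γ₂.r f))
    {x : FinPath Γ₁} {f : Γ₂.E} {L : List Γ₂.E} {v : Γ₂.V}
    (h : DCKRel Γ₁ Γ₂ Ω T x (f :: L) v) : DCKRel0 Γ₁ Γ₂ Ω x.rng (Γ₂.r f) := by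
  obtain ⟨x₁, x₂, hh, h1, h2, rfl⟩ := h
  rw [comp_rng]
  exact rel1_rng ha (hrng_sub f) h1

theorem rel_mult {L₁ : List Γ₂.E} {v₁ : Γ₂.V} {L₂ : List Γ₂.E} {v₂ : Γ₂.V}
    {x x' : FinPath Γ₁} (h : DCKRel Γ₁ Γ₂ Ω T x L₁ v₁) (h' : DCKRel Γ₁ Γ₂ Ω T x' L₂ v₂)
    (hx : x.src = x'.rng) : DCKRel Γ₁ Γ₂ Ω T (FinPath.comp Γ₁ x x' hx) (L₁ ++ L₂) v₂ := by
  induction L₁ generalizing x with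
  | nil =>
    have hcx : FinPath.comp Γ₁ x x' hx = x' := FinPath.ext' (by simp [h.1]) rfl
    rw [hcx]
    exact h'
  | cons f M ih =>
    obtain ⟨x₁, x₂, hh, h1, h2, rfl⟩ := h
    have hx₂ : x₂.src = x'.rng := by rw [← comp_src Γ₁ x₁ x₂ hh]; exact hx
    have hnew : x₁.src = (FinPath.comp Γ₁ x₂ x' hx₂).rng := by rw [comp_rng]; exact hh
    exact ⟨x₁, FinPath.comp Γ₁ x₂ x' hx₂, hnew, h1, ih h2 hx₂,
      comp_assoc x₁ x₂ x' hh hx₂ hx hnew⟩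

theorem rel_decomp
    (ha : ∀ (u : Γ₁.V) (v : Γ₂.V), cylV Γ₁ u ∩ Ω v = ∅ ∨ cylV Γ₁ u ∩ Ω v = cylV Γ₁ u)
    (hrng_sub : ∀ f, grng Γ₁ '' T f ⊆ Ω (Γ₂.r f))
    {L₁ L₂ : List Γ₂.E} {v₁ v₂ : Γ₂.V}
    (hnil : L₂ = [] → v₁ = v₂) (hcons : ∀ e M, L₂ = e :: M → v₁ = Γ₂.r e)
    {xb : FinPath Γ₁} (h : DCKRel Γ₁ Γ₂ Ω T xb (L₁ ++ L₂) v₂) :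
    ∃ (x x' : FinPath Γ₁) (hx : x.src = x'.rng),
      DCKRel Γ₁ Γ₂ Ω T x L₁ v₁ ∧ DCKRel Γ₁ Γ₂ Ω T x' L₂ v₂ ∧
        FinPath.comp Γ₁ x x' hx = xb := by
  induction L₁ generalizing xb with
  | nil =>
    rw [List.nil_append] at h
    have h0 : DCKRel0 Γ₁ Γ₂ Ω xb.rng v₁ := by
      cases L₂ with
      | nil => rw [hnil rfl]; exact rel_vtx_rng h
      | cons e M => rw [hcons e M rfl]; exact rel_cons_rng ha hrng_sub h
    have hx : (ofVtx Γ₁ xb.rng).src = xb.rng := rfl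
    exact ⟨ofVtx Γ₁ xb.rng, xb, hx, ⟨rfl, h0⟩, h, comp_ofVtx_left xb xb.rng hx⟩
  | cons f M ih =>
    obtain ⟨x₁, x₂, hh, h1, h2, rfl⟩ := h
    obtain ⟨x, x', hx, hM, hL₂, hcomp⟩ := ih h2
    have hX : x₁.src = x.rng := by rw [← hcomp, comp_rng] at hh; exact hh
    have hx' : (FinPath.comp Γ₁ x₁ x hX).src = x'.rng := by rw [comp_src]; exact hx
    refine ⟨FinPath.comp Γ₁ x₁ x hX, x', hx', ⟨x₁, x, hX, h1, hM, rfl⟩, hL₂, ?_⟩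
    apply FinPath.ext'
    · have he := congrArg (fun q : FinPath Γ₁ => q.edges) hcomp
      simp only [comp_edges] at he
      show (x₁.edges ++ x.edges) ++ x'.edges = x₁.edges ++ x₂.edges
      rw [← he, List.append_assoc]
    · have hs := congrArg (fun q : FinPath Γ₁ => q.src) hcomp
      show x'.src = x₂.src
      exact hs

theorem rel_finite (hcomp : ∀ v, IsCompact (Ω v))
    (hsrc_eq : ∀ f, gsrc Γ₁ '' T f = Ω (Γ₂.s f)) (L : List Γ₂.E) (v : Γ₂.V) :
    {x : FinPath Γ₁ | DCKRel Γ₁ Γ₂ Ω T x L v}.Finite := by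
  induction L with
  | nil =>
    apply Set.Finite.subset (Set.Finite.image (fun u => ofVtx Γ₁ u)
      (finite0 (Γ₂ := Γ₂) hcomp v))
    rintro x ⟨he, h0⟩
    exact ⟨x.src, h0, (FinPath.ext' (by simp [he]) rfl)⟩
  | cons f M ih =>
    have hS₁ : {x₁ : FinPath Γ₁ | DCKRel1 Γ₁ Γ₂ T x₁ f}.Finite :=
      finite1 (Ω := Ω) hcomp hsrc_eq f
    apply Set.Finite.of_finite_image
      (f := fun x : FinPath Γ₁ => (x.edges, x.src))
    · apply Set.Finite.subset (Set.Finite.image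
        (fun q : FinPath Γ₁ × FinPath Γ₁ => (q.1.edges ++ q.2.edges, q.2.src))
        (hS₁.prod ih))
      rintro p ⟨x, ⟨x₁, x₂, hh, h1, h2, rfl⟩, rfl⟩
      exact ⟨(x₁, x₂), ⟨h1, h2⟩, rfl⟩
    · intro x _ x' _ hq
      exact FinPath.ext' (congrArg Prod.fst hq) (congrArg Prod.snd hq)

theorem rel_edge_iff (hsrc_eq : ∀ f, gsrc Γ₁ '' T f = Ω (Γ₂.s f))
    {x : FinPath Γ₁} {f : Γ₂.E} :
    DCKRel Γ₁ Γ₂ Ω T x [f] (Γ₂.s f) ↔ DCKRel1 Γ₁ Γ₂ T x f := by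
  constructor
  · rintro ⟨x₁, x₂, hh, h1, ⟨hnil, h0⟩, rfl⟩
    have : FinPath.comp Γ₁ x₁ x₂ hh = x₁ := by
      apply FinPath.ext'
      · simp [hnil]
      · rw [comp_src, ← rng_of_edges_nil x₂ hnil, hh]
    rw [this]
    exact h1
  · intro h1
    have hx : x.src = (ofVtx Γ₁ x.src).rng := rfl
    refine ⟨x, ofVtx Γ₁ x.src, hx, h1, ⟨rfl, ?_⟩, (comp_ofVtx_right x x.src hx).symm⟩
    have h0 : DCKRel0 Γ₁ Γ₂ Ω x.src (Γ₂.s f) := rel1_src (hsrc_eq f) h1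
    exact h0

end Core

end DGraph

open DGraph in
/-- A dynamical Cuntz--Krieger `Γ₂`-family in the boundary path groupoid `G_{Γ₁}`
satisfying the two extra conditions (a) and (b) arises from an admissible relation
morphism `R : Γ₁ → Γ₂`, which is given on vertices by `Z_u Ω_v = Z_u` and on
edges by `T_f Z(s(x), x) = Z(x, x)`. -/
theorem dCK_from_admissible (Γ₁ Γ₂ : DGraph)
    (Ω : Γ₂.V → Set (BPath Γ₁)) (T : Γ₂.E → Set (GArrT Γ₁))
    (hCK : IsDCKb Γ₁ Γ₂ Ω T)
    (ha : ∀ (u : Γ₁.V) (v : Γ₂.V),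
      cylV Γ₁ u ∩ Ω v = ∅ ∨ cylV Γ₁ u ∩ Ω v = cylV Γ₁ u)
    (hb : ∀ (u : Γ₁.V) (f : Γ₂.E),
      gmul Γ₁ (T f) (unitSet Γ₁ (cylV Γ₁ u)) = ∅ ∨
      ∃ x : FinPath Γ₁,
        gmul Γ₁ (T f) (unitSet Γ₁ (cylV Γ₁ u)) = ZZ Γ₁ x (ofVtx Γ₁ x.src)) :
    ∃ R : Set (FinPath Γ₁ × FinPath Γ₂), IsAdmissible Γ₁ Γ₂ R ∧
      (∀ v, Ω v = relΩ Γ₁ Γ₂ R v) ∧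
      (∀ f, T f = relT Γ₁ Γ₂ R f) ∧
      (∀ (u : Γ₁.V) (v : Γ₂.V),
        (ofVtx Γ₁ u, ofVtx Γ₂ v) ∈ R ↔ cylV Γ₁ u ∩ Ω v = cylV Γ₁ u) ∧
      (∀ (x : FinPath Γ₁) (f : Γ₂.E),
        (x, ofEdge Γ₂ f) ∈ R ↔
          gmul Γ₁ (T f) (ZZ Γ₁ (ofVtx Γ₁ x.src) x) = ZZ Γ₁ x x) := by
  classical
  refine ⟨{p | DCKRel Γ₁ Γ₂ Ω T p.1 p.2.edges p.2.src}, ?_, ?_, ?_, ?_, ?_⟩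
  · -- IsAdmissible
    constructor
    case relMor =>
      constructor
      case vtx =>
        intro p hp hnil
        have hp' : DCKRel Γ₁ Γ₂ Ω T p.1 p.2.edges p.2.src := hp
        rw [hnil] at hp'
        exact hp'.1
      case src_mem =>
        intro p hp
        have h0 : DCKRel0 Γ₁ Γ₂ Ω p.1.src p.2.src := rel_src hp
        exact ⟨rfl, h0⟩
      case rng_mem =>
        intro p hp
        have hp' : DCKRel Γ₁ Γ₂ Ω T p.1 p.2.edges p.2.src := hp
        have h0 : DCKRel0 Γ₁ Γ₂ Ω p.1.rng p.2.rng := by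
          rcases hL : p.2.edges with _ | ⟨f, M⟩
          · rw [hL] at hp'
            rw [rng_of_edges_nil p.2 hL]
            exact rel_vtx_rng hp'
          · rw [hL] at hp'
            rw [rng_of_edges_cons p.2 f M hL]
            exact rel_cons_rng ha hCK.rng_sub hp'
        exact ⟨rfl, h0⟩
    case mult =>
      intro x y x' y' hx hy hxy hx'y'
      exact rel_mult hxy hx'y' hx
    case decomp =>
      intro y y' h xb hxb
      have hxb' : DCKRel Γ₁ Γ₂ Ω T xb (y.edges ++ y'.edges) y'.src := hxb
      obtain ⟨x, x', hx, hY, hY', hc⟩ := rel_decomp (v₁ := y.src) ha hCK.rng_sub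
        (fun h0 => by rwa [rng_of_edges_nil y' h0] at h)
        (fun e M hM => by rwa [rng_of_edges_cons y' e M hM] at h) hxb'
      exact ⟨x, x', hx, hY, hY', hc⟩
    case proper =>
      intro y
      exact rel_finite hCK.compact_Ω hCK.src_eq y.edges y.src
    case vdisj =>
      intro v v' hne
      rw [Set.eq_empty_iff_forall_notMem]
      rintro x ⟨h1, h2⟩
      have h1' : DCKRel0 Γ₁ Γ₂ Ω x.src v := (h1 : DCKRel Γ₁ Γ₂ Ω T x [] v).2
      have h2' : DCKRel0 Γ₁ Γ₂ Ω x.src v' := (h2 : DCKRel Γ₁ Γ₂ Ω T x [] v').2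
      obtain ⟨z, hz⟩ := cylV_nonempty Γ₁ x.src
      have hzv : z ∈ Ω v := rel0_iff.mp h1' hz
      have hzv' : z ∈ Ω v' := rel0_iff.mp h2' hz
      have := hCK.disj v v' hne
      rw [Set.eq_empty_iff_forall_notMem] at this
      exact this z ⟨hzv, hzv'⟩
    case sbij =>
      intro f
      refine ⟨?_, ?_, ?_⟩
      · -- MapsTo
        intro x hx
        have hx1 : DCKRel1 Γ₁ Γ₂ T x f := (rel_edge_iff hCK.src_eq).mp hx
        have h0 : DCKRel0 Γ₁ Γ₂ Ω x.src (Γ₂.s f) := rel1_src (hCK.src_eq f) hx1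
        exact ⟨rfl, h0⟩
      · -- InjOn
        intro x hx x' hx' heq
        have hsrc := congrArg (fun q : FinPath Γ₁ => q.src) heq
        exact rel1_inj_src ((rel_edge_iff hCK.src_eq).mp hx)
          ((rel_edge_iff hCK.src_eq).mp hx') hsrc
      · -- SurjOn
        intro w hw
        have hw' : DCKRel Γ₁ Γ₂ Ω T w [] (Γ₂.s f) := hw
        obtain ⟨z₀, hz₀⟩ := cylV_nonempty Γ₁ w.src
        have hzΩ : z₀ ∈ Ω (Γ₂.s f) := rel0_iff.mp hw'.2 hz₀
        rw [← hCK.src_eq f] at hzΩ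
        obtain ⟨a, haT, hasrc⟩ := hzΩ
        obtain ⟨x₀, h1, h2⟩ := rel1_of_src_nonempty (Γ₂ := Γ₂) hb
          ⟨a, haT, by rw [hasrc]; exact hz₀⟩
        refine ⟨x₀, (rel_edge_iff hCK.src_eq).mpr h1, ?_⟩
        exact FinPath.ext' (by simp [hw'.1]) h2
    case mono =>
      intro x x' f f' h h' hpre
      have h1 : DCKRel1 Γ₁ Γ₂ T x f := (rel_edge_iff hCK.src_eq).mp h
      have h1' : DCKRel1 Γ₁ Γ₂ T x' f' := (rel_edge_iff hCK.src_eq).mp h'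
      rcases hpre with hp | hp
      · exact mono_one hCK.rng_disj hCK.inj_r h1 h1' hp
      · obtain ⟨he1, he2⟩ := mono_one hCK.rng_disj hCK.inj_r h1' h1 hp
        exact ⟨he1.symm, he2.symm⟩
    case regular =>
      intro v hv u hu x hx
      have hu0 : DCKRel0 Γ₁ Γ₂ Ω u v := (hu : DCKRel Γ₁ Γ₂ Ω T (ofVtx Γ₁ u) [] v).2
      obtain ⟨f, x', hf, h1, hpre⟩ := regular_core ha hb hCK.reg hv hu0 hx
      exact ⟨f, x', hf, (rel_edge_iff hCK.src_eq).mpr h1, hpre⟩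
  · -- Ω v = relΩ
    intro v
    ext z
    constructor
    · intro hz
      have h0 : DCKRel0 Γ₁ Γ₂ Ω z.rng v := rel0_of_mem ha ⟨z, rfl, hz⟩
      exact Set.mem_biUnion (x := z.rng)
        (show DCKRel Γ₁ Γ₂ Ω T (ofVtx Γ₁ z.rng) [] v from ⟨rfl, h0⟩) rfl
    · intro hz
      simp only [relΩ, Set.mem_iUnion] at hz
      obtain ⟨u, hu, hzu⟩ := hz
      have h0 : DCKRel0 Γ₁ Γ₂ Ω u v := (hu : DCKRel Γ₁ Γ₂ Ω T (ofVtx Γ₁ u) [] v).2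
      exact rel0_iff.mp h0 hzu
  · -- T f = relT
    intro f
    ext a
    constructor
    · intro haT
      obtain ⟨x, h1, _, h3⟩ := rel1_exists (Γ₂ := Γ₂) hb haT
      exact Set.mem_biUnion ((rel_edge_iff hCK.src_eq).mpr h1) h3
    · intro haR
      simp only [relT, Set.mem_iUnion] at haR
      obtain ⟨x, hx, haZ⟩ := haR
      exact rel1_TF ((rel_edge_iff hCK.src_eq).mp hx) haZ
  · -- vertex iff
    intro u v
    exact ⟨fun h => h.2, fun h => ⟨rfl, h⟩⟩
  · -- edge iff
    intro x f
    exact (rel_edge_iff hCK.src_eq).trans (rel1_iff_gmul hb)
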